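/- Let G contain a diamond: a 5-cycle C = u1 z1 z2 u2 w where u1, u2 have a common neighbor x1 ∉ V(C), w has a neighbor x2 ∉ V(C), deg(u1)=deg(u2)=deg(w)=3, and deg(z1)=deg(z2)=2. Let G' be obtained from G − V(C) by adding a new path x1 v1 v2 x2 with new vertices v1, v2. Then |V(G)| = |V(G')| + 3 and α(G) = α(G') + 1. -/

import Mathlib

open SimpleGraph

/-- The independence number of a graph: the largest size of a set of pairwise
non-adjacent vertices. -/
noncomputable def alphaNum {V : Type*} (G : SimpleGraph V) : ℕ :=
  sSup {n | ∃ s : Finset V, ((s : Set V).Pairwise fun a b => ¬ G.Adj a b) ∧ s.card = n}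

/-- A diamond: a 5-cycle `u1 z1 z2 u2 w` such that `u1, u2` have a common neighbor
`x1` outside the cycle, `w` has a neighbor `x2` outside the cycle, the vertices
`u1, u2, w` have degree 3 and `z1, z2` have degree 2. -/
def IsDiamond {V : Type*} (G : SimpleGraph V) (u1 z1 z2 u2 w x1 x2 : V) : Prop :=
  [u1, z1, z2, u2, w, x1, x2].Nodup ∧
  G.Adj u1 z1 ∧ G.Adj z1 z2 ∧ G.Adj z2 u2 ∧ G.Adj u2 w ∧ G.Adj w u1 ∧
  G.Adj x1 u1 ∧ G.Adj x1 u2 ∧ G.Adj w x2 ∧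
  (G.neighborSet u1).ncard = 3 ∧ (G.neighborSet u2).ncard = 3 ∧
  (G.neighborSet w).ncard = 3 ∧
  (G.neighborSet z1).ncard = 2 ∧ (G.neighborSet z2).ncard = 2

/-- The graph obtained by replacing the diamond `u1 z1 z2 u2 w` by a path
`x1 v1 v2 x2` with two new vertices `v1, v2` (encoded as `Fin 2`). -/
def diamondReplaced {V : Type*} (G : SimpleGraph V) (u1 z1 z2 u2 w x1 x2 : V) :
    SimpleGraph ({x : V // x ∉ ({u1, z1, z2, u2, w} : Set V)} ⊕ Fin 2) :=
  SimpleGraph.fromRel fun a b =>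
    match a, b with
    | .inl a, .inl b => G.Adj a.1 b.1
    | .inl a, .inr i => (a.1 = x1 ∧ i = 0) ∨ (a.1 = x2 ∧ i = 1)
    | .inr _, .inr _ => True
    | _, _ => False

/- ---------- auxiliary lemmas ---------- -/

private lemma alpha_bdd {V : Type} [Finite V] (G : SimpleGraph V) :
    BddAbove {n | ∃ s : Finset V, ((s : Set V).Pairwise fun a b => ¬ G.Adj a b) ∧ s.card = n} := by
  have := Fintype.ofFinite V
  refine ⟨Fintype.card V, ?_⟩
  rintro n ⟨s, -, rfl⟩
  exact le_trans (Finset.card_le_card (Finset.subset_univ s)) (le_of_eq Finset.card_univ)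

private lemma exists_alpha {V : Type} [Finite V] (G : SimpleGraph V) :
    ∃ s : Finset V, ((s : Set V).Pairwise fun a b => ¬ G.Adj a b) ∧ s.card = alphaNum G := by
  have hne : ({n | ∃ s : Finset V, ((s : Set V).Pairwise fun a b => ¬ G.Adj a b) ∧ s.card = n}).Nonempty :=
    ⟨0, ∅, by simp, rfl⟩
  exact Nat.sSup_mem hne (alpha_bdd G)

private lemma le_alpha {V : Type} [Finite V] (G : SimpleGraph V) (s : Finset V)
    (h : (s : Set V).Pairwise fun a b => ¬ G.Adj a b) : s.card ≤ alphaNum G :=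
  le_csSup (alpha_bdd G) ⟨s, h, rfl⟩

private lemma nbrEq3 {V : Type} [Finite V] (G : SimpleGraph V) (v a b c : V)
    (ha : G.Adj v a) (hb : G.Adj v b) (hc : G.Adj v c)
    (hab : a ≠ b) (hac : a ≠ c) (hbc : b ≠ c)
    (hcard : (G.neighborSet v).ncard = 3) :
    ∀ y, G.Adj v y ↔ y = a ∨ y = b ∨ y = c := by
  intro y
  have hsub : ({a, b, c} : Set V) ⊆ G.neighborSet v := by
    intro t ht
    rcases ht with rfl | rfl | rfl <;> simpa
  have h3 : ({a, b, c} : Set V).ncard = 3 := by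
    rw [Set.ncard_insert_of_notMem (by simp [hab, hac]) (Set.toFinite _),
      Set.ncard_pair hbc]
  have heq := Set.eq_of_subset_of_ncard_le hsub (by omega) (Set.toFinite _)
  rw [← SimpleGraph.mem_neighborSet, ← heq]
  simp

private lemma nbrEq2 {V : Type} [Finite V] (G : SimpleGraph V) (v a b : V)
    (ha : G.Adj v a) (hb : G.Adj v b) (hab : a ≠ b)
    (hcard : (G.neighborSet v).ncard = 2) :
    ∀ y, G.Adj v y ↔ y = a ∨ y = b := by
  intro y
  have hsub : ({a, b} : Set V) ⊆ G.neighborSet v := by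
    intro t ht
    rcases ht with rfl | rfl <;> simpa
  have h2 : ({a, b} : Set V).ncard = 2 := Set.ncard_pair hab
  have heq := Set.eq_of_subset_of_ncard_le hsub (by omega) (Set.toFinite _)
  rw [← SimpleGraph.mem_neighborSet, ← heq]
  simp

section dRadj
variable {V : Type*} (G : SimpleGraph V) (u1 z1 z2 u2 w x1 x2 : V)

private lemma dR_inl_inl (a b : {x : V // x ∉ ({u1, z1, z2, u2, w} : Set V)}) :
    (diamondReplaced G u1 z1 z2 u2 w x1 x2).Adj (.inl a) (.inl b) ↔ a ≠ b ∧ G.Adj a.1 b.1 := by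
  simp only [diamondReplaced, fromRel_adj, ne_eq, Sum.inl.injEq]
  constructor
  · rintro ⟨h1, h2 | h2⟩
    · exact ⟨h1, h2⟩
    · exact ⟨h1, h2.symm⟩
  · rintro ⟨h1, h2⟩
    exact ⟨h1, Or.inl h2⟩

private lemma dR_inl_inr (a : {x : V // x ∉ ({u1, z1, z2, u2, w} : Set V)}) (i : Fin 2) :
    (diamondReplaced G u1 z1 z2 u2 w x1 x2).Adj (.inl a) (.inr i) ↔
      (a.1 = x1 ∧ i = 0) ∨ (a.1 = x2 ∧ i = 1) := by
  simp only [diamondReplaced, fromRel_adj, ne_eq]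
  simp

private lemma dR_inr_inr (i j : Fin 2) :
    (diamondReplaced G u1 z1 z2 u2 w x1 x2).Adj (.inr i) (.inr j) ↔ i ≠ j := by
  simp only [diamondReplaced, fromRel_adj, ne_eq]
  simp

end dRadj

/-- Replacing a diamond `u1 z1 z2 u2 w` by a path `x1 v1 v2 x2` (with two new
vertices) yields a graph `G'` with `|V(G)| = |V(G')| + 3` and `α(G) = α(G') + 1`. -/
theorem stmt7 {V : Type} [Finite V] (G : SimpleGraph V) (u1 z1 z2 u2 w x1 x2 : V)
    (hdia : IsDiamond G u1 z1 z2 u2 w x1 x2) :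
    Nat.card V =
      Nat.card ({x : V // x ∉ ({u1, z1, z2, u2, w} : Set V)} ⊕ Fin 2) + 3 ∧
    alphaNum G = alphaNum (diamondReplaced G u1 z1 z2 u2 w x1 x2) + 1 := by
  classical
  obtain ⟨hnd, h12, h23, h34, h45, h51, hx1u1, hx1u2, hwx2, d1, d2, d3, e1, e2⟩ := hdia
  simp only [List.nodup_cons, List.mem_cons, List.not_mem_nil, or_false, List.mem_singleton,
    List.nodup_nil, and_true, not_or] at hnd
  obtain ⟨⟨n12, n13, n14, n15, n16, n17⟩, ⟨n23, n24, n25, n26, n27⟩,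
    ⟨n34, n35, n36, n37⟩, ⟨n45, n46, n47⟩, ⟨n56, n57⟩, n67⟩ := hnd
  set S : Set V := {u1, z1, z2, u2, w} with hS
  set Sub := {x : V // x ∉ S}
  set G' := diamondReplaced G u1 z1 z2 u2 w x1 x2 with hG'
  -- neighborhood characterizations
  have hu1 := nbrEq3 G u1 z1 w x1 h12 h51.symm hx1u1.symm n25 n26 n56 d1
  have hu2 := nbrEq3 G u2 z2 w x1 h34.symm h45 hx1u2.symm n35 n36 n56 d2
  have hw := nbrEq3 G w u1 u2 x2 h51 h45.symm hwx2 n14 n17 n47 d3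
  have hz1 := nbrEq2 G z1 u1 z2 h12.symm h23 n13 e1
  have hz2 := nbrEq2 G z2 z1 u2 h23.symm h34 n24 e2
  have haS : ∀ a : Sub, a.1 ≠ u1 ∧ a.1 ≠ z1 ∧ a.1 ≠ z2 ∧ a.1 ≠ u2 ∧ a.1 ≠ w := by
    intro a
    have := a.2
    simp only [hS, Set.mem_insert_iff, Set.mem_singleton_iff, not_or] at this
    exact this
  constructor
  · -- cardinality
    have hcard5 : S.ncard = 5 := by
      rw [show S = (↑({u1, z1, z2, u2, w} : Finset V) : Set V) by simp [hS]]
      rw [Set.ncard_coe_finset]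
      simp [Finset.card_insert_of_notMem, n12, n13, n14, n15, n23, n24, n25, n34, n35, n45]
    have h1 : Nat.card {x : V // x ∉ S} = Nat.card V - 5 := by
      have := Set.ncard_add_ncard_compl S
      have hc : Nat.card {x : V // x ∉ S} = (Sᶜ).ncard := by
        rw [← Nat.card_coe_set_eq]
        exact Nat.card_congr (Equiv.subtypeEquivRight (by simp))
      omega
    have h5 : 5 ≤ Nat.card V := by
      rw [← hcard5]
      exact (Set.ncard_le_ncard (Set.subset_univ _) (Set.toFinite _)).trans (by simp [Set.ncard_univ])
    rw [Nat.card_sum, h1]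
    simp only [Nat.card_eq_fintype_card, Fintype.card_fin]
    omega
  · -- independence numbers
    refine le_antisymm ?dir2 ?dir1
    case dir1 =>
      -- alphaNum G' + 1 ≤ alphaNum G
      obtain ⟨s', hp', hc'⟩ := exists_alpha G'
      set h : Sub ⊕ Fin 2 → V := Sum.elim Subtype.val (fun i => if i = 0 then u1 else w) with hh
      have hinj : Set.InjOn h ↑s' := by
        intro x hx y hy hxy
        cases x with
        | inl a =>
          cases y with
          | inl b =>
            simp only [hh, Sum.elim_inl] at hxy
            exact congrArg Sum.inl (Subtype.ext hxy)
          | inr i =>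
            exfalso
            simp only [hh, Sum.elim_inl, Sum.elim_inr] at hxy
            fin_cases i <;> simp at hxy <;>
              [exact a.2 (by rw [hxy]; simp [hS]); exact a.2 (by rw [hxy]; simp [hS])]
        | inr i =>
          cases y with
          | inl b =>
            exfalso
            simp only [hh, Sum.elim_inl, Sum.elim_inr] at hxy
            fin_cases i <;> simp at hxy <;>
              [exact b.2 (by rw [← hxy]; simp [hS]); exact b.2 (by rw [← hxy]; simp [hS])]
          | inr j =>
            simp only [hh, Sum.elim_inr] at hxy
            fin_cases i <;> fin_cases j <;> simp_all
      have hG : ∀ a b : Sub, (.inl a : Sub ⊕ Fin 2) ∈ s' → (.inl b : Sub ⊕ Fin 2) ∈ s' →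
          a.1 ≠ b.1 → ¬ G.Adj a.1 b.1 := by
        intro a b ha hb hne hadj
        exact hp' ha hb (fun hcon => hne (congrArg (Sum.elim Subtype.val (fun _ => u1)) hcon))
          ((dR_inl_inl G u1 z1 z2 u2 w x1 x2 a b).mpr ⟨fun hc => hne (congrArg Subtype.val hc), hadj⟩)
      by_cases h0 : (.inr 0 : Sub ⊕ Fin 2) ∈ s'
      · -- case A : add z2, inr 0 maps to u1
        have hno2 : (.inr 1 : Sub ⊕ Fin 2) ∉ s' := by
          intro h1m
          exact hp' h0 h1m (by simp) ((dR_inr_inr G u1 z1 z2 u2 w x1 x2 0 1).mpr (by decide))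
        set t : Finset V := insert z2 (s'.image h) with hts
        have hz2not : z2 ∉ s'.image h := by
          simp only [Finset.mem_image]
          rintro ⟨x, hx, hxe⟩
          cases x with
          | inl a => exact (haS a).2.2.1 hxe
          | inr i =>
            fin_cases i
            · simp [hh] at hxe; exact n13 hxe
            · exact hno2 hx
        have hcardt : t.card = s'.card + 1 := by
          rw [hts, Finset.card_insert_of_notMem hz2not, Finset.card_image_of_injOn hinj]
        have hmem : ∀ p, p ∈ (t : Set V) →
            p = z2 ∨ p = u1 ∨ ∃ a : Sub, (.inl a : Sub ⊕ Fin 2) ∈ s' ∧ a.1 = p := by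
          intro p hp
          simp only [hts, Finset.coe_insert, Set.mem_insert_iff, Finset.coe_image,
            Set.mem_image, Finset.mem_coe] at hp
          rcases hp with rfl | ⟨x, hx, rfl⟩
          · exact Or.inl rfl
          · cases x with
            | inl a => exact Or.inr (Or.inr ⟨a, hx, rfl⟩)
            | inr i =>
              fin_cases i
              · exact Or.inr (Or.inl (by simp [hh]))
              · exact absurd hx hno2
        have hZ2 : ∀ y : V, y ≠ z1 → y ≠ u2 → ¬ G.Adj z2 y := by
          intro y hy1 hy2 hadj
          rw [hz2] at hadj
          tauto
        have hA : ∀ b : Sub, (.inl b : Sub ⊕ Fin 2) ∈ s' → ¬ G.Adj u1 b.1 := by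
          intro b hb hadj
          rw [hu1] at hadj
          obtain ⟨q1, q2, q3, q4, q5⟩ := haS b
          rcases hadj with hc | hc | hc
          · exact q2 hc
          · exact q5 hc
          · exact hp' hb h0 (by simp)
              ((dR_inl_inr G u1 z1 z2 u2 w x1 x2 b 0).mpr (Or.inl ⟨hc, rfl⟩))
        have hind : (t : Set V).Pairwise fun a b => ¬ G.Adj a b := by
          rintro p hp q hq hne
          rcases hmem p hp with rfl | rfl | ⟨a, ha, rfl⟩ <;>
            rcases hmem q hq with rfl | rfl | ⟨b, hb, rfl⟩
          · exact absurd rfl hne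
          · exact hZ2 _ n12 n14
          · exact hZ2 b.1 (haS b).2.1 (haS b).2.2.2.1
          · exact fun hadj => hZ2 _ n12 n14 hadj.symm
          · exact absurd rfl hne
          · exact hA b hb
          · exact fun hadj => hZ2 a.1 (haS a).2.1 (haS a).2.2.2.1 hadj.symm
          · exact fun hadj => hA a ha hadj.symm
          · exact hG a b ha hb hne
        calc alphaNum G' + 1 = t.card := by omega
        _ ≤ alphaNum G := le_alpha G t hind
      · -- case B/C : add z1
        set t : Finset V := insert z1 (s'.image h) with hts
        have hz1not : z1 ∉ s'.image h := by
          simp only [Finset.mem_image]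
          rintro ⟨x, hx, hxe⟩
          cases x with
          | inl a => exact (haS a).2.1 hxe
          | inr i =>
            fin_cases i
            · exact h0 hx
            · simp [hh] at hxe; exact n25 hxe.symm
        have hcardt : t.card = s'.card + 1 := by
          rw [hts, Finset.card_insert_of_notMem hz1not, Finset.card_image_of_injOn hinj]
        have hmem : ∀ p, p ∈ (t : Set V) →
            p = z1 ∨ (p = w ∧ (.inr 1 : Sub ⊕ Fin 2) ∈ s') ∨
              ∃ a : Sub, (.inl a : Sub ⊕ Fin 2) ∈ s' ∧ a.1 = p := by
          intro p hp
          simp only [hts, Finset.coe_insert, Set.mem_insert_iff, Finset.coe_image,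
            Set.mem_image, Finset.mem_coe] at hp
          rcases hp with rfl | ⟨x, hx, rfl⟩
          · exact Or.inl rfl
          · cases x with
            | inl a => exact Or.inr (Or.inr ⟨a, hx, rfl⟩)
            | inr i =>
              fin_cases i
              · exact absurd hx h0
              · exact Or.inr (Or.inl ⟨by simp [hh], hx⟩)
        have hZ1 : ∀ y : V, y ≠ u1 → y ≠ z2 → ¬ G.Adj z1 y := by
          intro y hy1 hy2 hadj
          rw [hz1] at hadj
          tauto
        have hW : ∀ b : Sub, (.inl b : Sub ⊕ Fin 2) ∈ s' → (.inr 1 : Sub ⊕ Fin 2) ∈ s' →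
            ¬ G.Adj w b.1 := by
          intro b hb h1m hadj
          rw [hw] at hadj
          obtain ⟨q1, q2, q3, q4, q5⟩ := haS b
          rcases hadj with hc | hc | hc
          · exact q1 hc
          · exact q4 hc
          · exact hp' hb h1m (by simp)
              ((dR_inl_inr G u1 z1 z2 u2 w x1 x2 b 1).mpr (Or.inr ⟨hc, rfl⟩))
        have hind : (t : Set V).Pairwise fun a b => ¬ G.Adj a b := by
          rintro p hp q hq hne
          rcases hmem p hp with rfl | ⟨rfl, h1m⟩ | ⟨a, ha, rfl⟩ <;>
            rcases hmem q hq with rfl | ⟨rfl, h1m'⟩ | ⟨b, hb, rfl⟩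
          · exact absurd rfl hne
          · exact hZ1 _ (Ne.symm n15) (Ne.symm n35)
          · exact hZ1 b.1 (haS b).1 (haS b).2.2.1
          · exact fun hadj => hZ1 _ (Ne.symm n15) (Ne.symm n35) hadj.symm
          · exact absurd rfl hne
          · exact hW b hb h1m
          · exact fun hadj => hZ1 a.1 (haS a).1 (haS a).2.2.1 hadj.symm
          · exact fun hadj => hW a ha h1m' hadj.symm
          · exact hG a b ha hb hne
        calc alphaNum G' + 1 = t.card := by omega
        _ ≤ alphaNum G := le_alpha G t hind
    case dir2 =>
      -- alphaNum G ≤ alphaNum G' + 1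
      obtain ⟨s, hp, hc⟩ := exists_alpha G
      have con : ∀ a b : V, G.Adj a b → a ∈ s → b ∈ s → False := by
        intro a b hab ha hb
        exact hp ha hb (fun hcon => G.irrefl (hcon ▸ hab)) hab
      set base : Finset (Sub ⊕ Fin 2) :=
        (s.subtype (fun x => x ∉ S)).map ⟨Sum.inl, Sum.inl_injective⟩ with hbase
      have hbmem : ∀ p, p ∈ base ↔ ∃ a : Sub, a.1 ∈ s ∧ Sum.inl a = p := by
        intro p
        simp only [hbase, Finset.mem_map, Function.Embedding.coeFn_mk]
        constructor
        · rintro ⟨a, ha, rfl⟩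
          exact ⟨a, Finset.mem_subtype.mp ha, rfl⟩
        · rintro ⟨a, ha, rfl⟩
          exact ⟨a, Finset.mem_subtype.mpr ha, rfl⟩
      have hbcard : base.card = (s.filter (fun x => x ∉ S)).card := by
        rw [hbase, Finset.card_map, Finset.card_subtype]
      have hsplit : (s.filter (fun x => x ∉ S)).card + (s.filter (fun x => ¬ x ∉ S)).card
          = s.card := Finset.card_filter_add_card_filter_not _
      set F : Finset V := s.filter (fun x => ¬ x ∉ S) with hF
      have hFmem : ∀ x, x ∈ F ↔ x ∈ s ∧ (x = u1 ∨ x = z1 ∨ x = z2 ∨ x = u2 ∨ x = w) := by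
        intro x
        rw [hF, Finset.mem_filter, not_not]
        rw [hS]
        simp only [Set.mem_insert_iff, Set.mem_singleton_iff]
      have pair_le : ∀ a b : V, ({a, b} : Finset V).card ≤ 2 :=
        fun a b => (Finset.card_insert_le _ _).trans (by simp)
      -- base is independent
      have hbind : (base : Set (Sub ⊕ Fin 2)).Pairwise fun a b => ¬ G'.Adj a b := by
        rintro p hp' q hq' hne hadj
        obtain ⟨a, ha, rfl⟩ := (hbmem p).mp hp'
        obtain ⟨b, hb, rfl⟩ := (hbmem q).mp hq'
        rw [dR_inl_inl] at hadj
        exact con a.1 b.1 hadj.2 ha hb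
      have hk2 : F.card ≤ 2 := by
        by_cases hws : w ∈ s
        · have hu1s : u1 ∉ s := fun hx => con w u1 h51 hws hx
          have hu2s : u2 ∉ s := fun hx => con u2 w h45 hx hws
          by_cases hz1s : z1 ∈ s
          · have hz2s : z2 ∉ s := fun hx => con z1 z2 h23 hz1s hx
            refine (Finset.card_le_card ?_).trans (pair_le z1 w)
            intro x hx
            obtain ⟨hxs, hx5⟩ := (hFmem x).mp hx
            rcases hx5 with rfl | rfl | rfl | rfl | rfl <;> first | exact absurd hxs (by assumption) | simp
          · refine (Finset.card_le_card ?_).trans (pair_le z2 w)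
            intro x hx
            obtain ⟨hxs, hx5⟩ := (hFmem x).mp hx
            rcases hx5 with rfl | rfl | rfl | rfl | rfl <;> first | exact absurd hxs (by assumption) | simp
        · by_cases hz1s : z1 ∈ s
          · have hu1s : u1 ∉ s := fun hx => con u1 z1 h12 hx hz1s
            have hz2s : z2 ∉ s := fun hx => con z1 z2 h23 hz1s hx
            refine (Finset.card_le_card ?_).trans (pair_le z1 u2)
            intro x hx
            obtain ⟨hxs, hx5⟩ := (hFmem x).mp hx
            rcases hx5 with rfl | rfl | rfl | rfl | rfl <;> first | exact absurd hxs (by assumption) | simp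
          · by_cases hz2s : z2 ∈ s
            · have hu2s : u2 ∉ s := fun hx => con z2 u2 h34 hz2s hx
              refine (Finset.card_le_card ?_).trans (pair_le u1 z2)
              intro x hx
              obtain ⟨hxs, hx5⟩ := (hFmem x).mp hx
              rcases hx5 with rfl | rfl | rfl | rfl | rfl <;> first | exact absurd hxs (by assumption) | simp
            · refine (Finset.card_le_card ?_).trans (pair_le u1 u2)
              intro x hx
              obtain ⟨hxs, hx5⟩ := (hFmem x).mp hx
              rcases hx5 with rfl | rfl | rfl | rfl | rfl <;> first | exact absurd hxs (by assumption) | simp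
      by_cases hk1 : F.card ≤ 1
      · have := le_alpha G' base hbind
        omega
      · -- F.card = 2
        have hFc : F.card = 2 := by omega
        -- choose the new vertex
        have key : ∃ j : Fin 2, ((j = 0 → x1 ∉ s) ∧ (j = 1 → x2 ∉ s)) := by
          by_cases hx1s : x1 ∈ s
          · have hu1s : u1 ∉ s := fun hx => con x1 u1 hx1u1 hx1s hx
            have hu2s : u2 ∉ s := fun hx => con x1 u2 hx1u2 hx1s hx
            have hws : w ∈ s := by
              by_contra hws
              have h1 : F.card ≤ 1 := by
                by_cases hz1s : z1 ∈ s
                · have hz2s : z2 ∉ s := fun hx => con z1 z2 h23 hz1s hx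
                  refine (Finset.card_le_card (fun x hx => ?_)).trans
                    (Finset.card_singleton z1).le
                  obtain ⟨hxs, hx5⟩ := (hFmem x).mp hx
                  rcases hx5 with rfl | rfl | rfl | rfl | rfl <;> first | exact absurd hxs (by assumption) | simp
                · refine (Finset.card_le_card (fun x hx => ?_)).trans
                    (Finset.card_singleton z2).le
                  obtain ⟨hxs, hx5⟩ := (hFmem x).mp hx
                  rcases hx5 with rfl | rfl | rfl | rfl | rfl <;> first | exact absurd hxs (by assumption) | simp
              omega
            have hx2s : x2 ∉ s := fun hx => con w x2 hwx2 hws hx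
            exact ⟨1, fun hcon => absurd hcon (by decide), fun _ => hx2s⟩
          · exact ⟨0, fun _ => hx1s, fun hcon => absurd hcon (by decide)⟩
        obtain ⟨j, hj0, hj1⟩ := key
        have hjnot : (.inr j : Sub ⊕ Fin 2) ∉ base := by
          intro hmem
          obtain ⟨a, -, hcon⟩ := (hbmem _).mp hmem
          exact Sum.inl_ne_inr hcon
        have hind : ((insert (.inr j) base : Finset (Sub ⊕ Fin 2)) : Set (Sub ⊕ Fin 2)).Pairwise
            fun a b => ¬ G'.Adj a b := by
          have hside : ∀ a : Sub, a.1 ∈ s → ¬ G'.Adj (.inl a) (.inr j) := by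
            intro a ha hadj
            rw [dR_inl_inr] at hadj
            rcases hadj with ⟨hax, hj⟩ | ⟨hax, hj⟩
            · exact hj0 hj (hax ▸ ha)
            · exact hj1 hj (hax ▸ ha)
          rintro p hp' q hq' hne
          simp only [Finset.coe_insert, Set.mem_insert_iff, Finset.mem_coe] at hp' hq'
          rcases hp' with rfl | hp' <;> rcases hq' with rfl | hq'
          · exact absurd rfl hne
          · obtain ⟨b, hb, rfl⟩ := (hbmem q).mp hq'
            exact fun hadj => hside b hb hadj.symm
          · obtain ⟨a, ha, rfl⟩ := (hbmem p).mp hp'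
            exact hside a ha
          · exact hbind hp' hq' hne
        have hcard2 : (insert (.inr j) base : Finset (Sub ⊕ Fin 2)).card = base.card + 1 :=
          Finset.card_insert_of_notMem hjnot
        have := le_alpha G' _ hind
        have hFle : F.card ≤ s.card := by
          rw [hF]; exact Finset.card_filter_le _ _
        omega
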